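/- Let p be a prime, k ≥ 1 an integer with q = p^k, let λ ∈ (0,1) be a real number, and set γ = λ^{−q(p−1)/p} − 1. Let G = (V, E) be a finite connected simple graph with m edges, each edge given an arbitrary orientation, and let Φ be the F_p-linear map from functions σ : V → F_p^k to functions F_p^k × E → F_p given by Φ(σ)(α, (u,v)) = ∑_{i=1}^{k} α_i (σ(v)_i − σ(u)_i). Let C be the image of Φ, a linear code of length qm over F_p. Then Z_Potts(G; q, γ) = q · λ^{−(1−1/p)qm} · ∑_{w ∈ C} λ^{‖w‖}, where ‖w‖ denotes the number of nonzero entries of w. -/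

import Mathlib

open scoped Classical

theorem auxA (p : ℕ) [Fact p.Prime] (k : ℕ) (d : Fin k → ZMod p) (hd : d ≠ 0) :
    Fintype.card {α : Fin k → ZMod p // ∑ i, α i * d i ≠ 0} = p ^ k - p ^ (k - 1) := by
  set L : (Fin k → ZMod p) → ZMod p := fun α => ∑ i, α i * d i with hL
  have hLsub : ∀ a b, L (a - b) = L a - L b := by
    intro a b
    simp only [hL, Pi.sub_apply, sub_mul, Finset.sum_sub_distrib]
  obtain ⟨i, hi⟩ : ∃ i, d i ≠ 0 := by
    by_contra h; push_neg at h; exact hd (funext h)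
  have hsurj : ∀ t : ZMod p, ∃ a, L a = t := by
    intro t
    refine ⟨Pi.single i (t * (d i)⁻¹), ?_⟩
    simp only [hL]
    rw [Finset.sum_eq_single i]
    · rw [Pi.single_eq_same, mul_assoc, inv_mul_cancel₀ hi, mul_one]
    · intro j _ hj; rw [Pi.single_eq_of_ne hj, zero_mul]
    · intro h; exact absurd (Finset.mem_univ i) h
  have hfib : ∀ t : ZMod p, Fintype.card {α // L α = t} = Fintype.card {α // L α = 0} := by
    intro t
    obtain ⟨a, ha⟩ := hsurj t
    refine Fintype.card_congr ⟨fun x => ⟨x.1 - a, by rw [hLsub, x.2, ha, sub_self]⟩,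
      fun x => ⟨x.1 + a, ?_⟩, fun x => by simp, fun x => by simp⟩
    have h2 := hLsub (x.1 + a) a
    simp only [add_sub_cancel_right, x.2] at h2
    rw [eq_comm, sub_eq_zero] at h2
    rw [h2, ha]
  have htot : Fintype.card (Fin k → ZMod p)
      = ∑ t : ZMod p, Fintype.card {α // L α = t} := by
    rw [← Fintype.card_sigma]
    exact Fintype.card_congr (Equiv.sigmaFiberEquiv L).symm
  have hcard : Fintype.card (Fin k → ZMod p) = p ^ k := by
    simp [ZMod.card]
  have hzero : Fintype.card {α // L α = 0} = p ^ (k - 1) := by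
    have : p ^ k = p * Fintype.card {α // L α = 0} := by
      rw [← hcard, htot]
      simp only [hfib, Finset.sum_const, Finset.card_univ, ZMod.card, smul_eq_mul]
    have hk1 : 1 ≤ k := by
      by_contra h
      push_neg at h
      interval_cases k
      exact hd (funext fun j => absurd j.2 (by omega))
    have hp : p ^ k = p * p ^ (k - 1) := by
      conv_lhs => rw [← Nat.sub_add_cancel hk1]
      ring
    have hppos : 0 < p := (Fact.out : p.Prime).pos
    have := this.symm.trans hp
    exact (Nat.eq_of_mul_eq_mul_left hppos this.symm).symm ▸ rfl
  calc Fintype.card {α : Fin k → ZMod p // ∑ i, α i * d i ≠ 0}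
      = Fintype.card (Fin k → ZMod p) - Fintype.card {α // L α = 0} := by
        convert Fintype.card_subtype_compl (fun α => L α = 0) using 2
    _ = p ^ k - p ^ (k - 1) := by rw [hcard, hzero]


theorem auxB {V X : Type*} (G : SimpleGraph V) (hconn : G.Connected)
    (σ : V → X) (h : ∀ u v, G.Adj u v → σ u = σ v) (u v : V) : σ u = σ v := by
  obtain ⟨w⟩ := hconn u v
  induction w with
  | nil => rfl
  | cons ha _ ih => exact (h _ _ ha).trans ih

set_option synthInstance.maxSize 256 in
open scoped Classical in
theorem stmt14 (p : ℕ) [Fact p.Prime] (k : ℕ) (hk : 1 ≤ k) (q : ℕ) (hq : q = p ^ k)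
    (lam : ℝ) (hlam : lam ∈ Set.Ioo (0 : ℝ) 1)
    (gam : ℝ) (hgam : gam = lam ^ (-((q : ℝ) * ((p : ℝ) - 1)) / (p : ℝ)) - 1)
    {V : Type*} [Fintype V] (G : SimpleGraph V) (hconn : G.Connected)
    (orient : ↥G.edgeSet → V × V)
    (horient : ∀ e : ↥G.edgeSet, s((orient e).1, (orient e).2) = (e : Sym2 V))
    (Φ : (V → Fin k → ZMod p) → ((Fin k → ZMod p) × ↥G.edgeSet → ZMod p))
    (hΦ : ∀ σ x, Φ σ x = ∑ i, x.1 i * (σ (orient x.2).2 i - σ (orient x.2).1 i)) :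
    ∑ σ : V → Fin q,
        (1 + gam) ^ Nat.card {e : ↥G.edgeSet // (Sym2.map σ (e : Sym2 V)).IsDiag}
      = (q : ℝ)
          * lam ^ (-((1 - 1 / (p : ℝ)) * (q : ℝ) * (Nat.card ↥G.edgeSet : ℝ)))
          * ∑ w ∈ {g : (Fin k → ZMod p) × ↥G.edgeSet → ZMod p |
                ∃ σ, Φ σ = g}.toFinset,
              lam ^ Nat.card {x : (Fin k → ZMod p) × ↥G.edgeSet // w x ≠ 0} := by
  classical
  obtain ⟨hlam0, hlam1⟩ := hlam
  have hlamne : lam ≠ 0 := ne_of_gt hlam0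
  have hp : p.Prime := Fact.out
  have hppos : 0 < p := hp.pos
  have hpR : (p : ℝ) ≠ 0 := Nat.cast_ne_zero.mpr hppos.ne'
  set c : ℕ := p ^ k - p ^ (k - 1) with hc
  set m : ℕ := Fintype.card ↥G.edgeSet with hm
  have hmcard : Nat.card ↥G.edgeSet = m := Nat.card_eq_fintype_card
  have hpk : p ^ (k - 1) * p = p ^ k := by
    rw [← pow_succ]; congr 1; omega
  have hple : p ^ (k - 1) ≤ p ^ k := Nat.pow_le_pow_right hppos (by omega)
  have hcR : (c : ℝ) * (p : ℝ) = (q : ℝ) * ((p : ℝ) - 1) := by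
    rw [hc, hq]
    push_cast [Nat.cast_sub hple]
    have : ((p : ℝ)) ^ (k - 1) * p = (p : ℝ) ^ k := by
      rw [← pow_succ]; congr 1; omega
    nlinarith [this]
  -- mono count for σ : V → (Fin k → ZMod p)
  set mono : (V → Fin k → ZMod p) → ℕ :=
    fun σ => Fintype.card {e : ↥G.edgeSet // σ (orient e).1 = σ (orient e).2} with hmono
  -- Step A: weight of Φ σ
  have hweight : ∀ σ : V → Fin k → ZMod p,
      Nat.card {x : (Fin k → ZMod p) × ↥G.edgeSet // Φ σ x ≠ 0} = c * (m - mono σ) := by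
    intro σ
    rw [Nat.card_eq_fintype_card]
    have e3 : {x : (Fin k → ZMod p) × ↥G.edgeSet // Φ σ x ≠ 0}
        ≃ Σ e : ↥G.edgeSet, {α : Fin k → ZMod p // Φ σ (α, e) ≠ 0} :=
      ((Equiv.prodComm _ _).subtypeEquiv (fun x => Iff.rfl)).trans
        (Equiv.subtypeProdEquivSigmaSubtype fun (e : ↥G.edgeSet) (α : Fin k → ZMod p) =>
          Φ σ (α, e) ≠ 0)
    rw [Fintype.card_congr e3, Fintype.card_sigma]
    have hper : ∀ e : ↥G.edgeSet, Fintype.card {α : Fin k → ZMod p // Φ σ (α, e) ≠ 0}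
        = if σ (orient e).1 = σ (orient e).2 then 0 else c := by
      intro e
      by_cases he : σ (orient e).1 = σ (orient e).2
      · rw [if_pos he, Fintype.card_eq_zero_iff]
        exact ⟨fun x => x.2 (by simp [hΦ, he])⟩
      · rw [if_neg he]
        have hd : (fun i => σ (orient e).2 i - σ (orient e).1 i) ≠ 0 := by
          intro h
          apply he
          funext i
          have := congrFun h i
          simp only [Pi.zero_apply, sub_eq_zero] at this
          exact this.symm
        have hA := auxA p k (fun i => σ (orient e).2 i - σ (orient e).1 i) hd
        rw [show Fintype.card {α : Fin k → ZMod p // Φ σ (α, e) ≠ 0}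
            = Fintype.card {α : Fin k → ZMod p //
                ∑ i, α i * (σ (orient e).2 i - σ (orient e).1 i) ≠ 0} from
          Fintype.card_congr (Equiv.subtypeEquivRight fun α => by rw [hΦ]), hA, hc]
    rw [Finset.sum_congr rfl fun e _ => hper e, Finset.sum_ite, Finset.sum_const,
      Finset.sum_const, smul_zero, zero_add, smul_eq_mul, mul_comm]
    congr 1
    have h1 : (Finset.univ.filter fun e : ↥G.edgeSet =>
          σ (orient e).1 = σ (orient e).2).card = mono σ :=
      (Fintype.card_subtype _).symm
    have h2 := Finset.card_filter_add_card_filter_not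
      (s := (Finset.univ : Finset ↥G.edgeSet))
      (p := fun e => σ (orient e).1 = σ (orient e).2)
    rw [Finset.card_univ] at h2
    omega
  have hmono_le : ∀ σ, mono σ ≤ m := fun σ => Fintype.card_subtype_le _
  -- Step B: kernel is constants
  have hker : ∀ τ : V → Fin k → ZMod p, Φ τ = 0 → ∀ u v : V, τ u = τ v := by
    intro τ h0
    have hE : ∀ e : ↥G.edgeSet, τ (orient e).1 = τ (orient e).2 := by
      intro e
      funext i
      have h1 := congrFun h0 (Pi.single i (1 : ZMod p), e)
      rw [hΦ] at h1
      simp only [Pi.zero_apply] at h1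
      rw [Finset.sum_eq_single i (fun j _ hj => by rw [Pi.single_eq_of_ne hj, zero_mul])
        (fun h => absurd (Finset.mem_univ i) h), Pi.single_eq_same, one_mul,
        sub_eq_zero] at h1
      exact h1.symm
    refine auxB G hconn τ (fun a b hab => ?_)
    have h2 := horient ⟨s(a, b), hab⟩
    rw [Sym2.eq_iff] at h2
    have h3 := hE ⟨s(a, b), hab⟩
    rcases h2 with ⟨ha, hb⟩ | ⟨ha, hb⟩
    · rw [ha, hb] at h3; exact h3
    · rw [ha, hb] at h3; exact h3.symm
  -- Step C: fiber cardinality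
  have hfiber : ∀ w ∈ Finset.univ.image Φ,
      (Finset.univ.filter fun σ : V → Fin k → ZMod p => Φ σ = w).card = q := by
    intro w hw
    rw [Finset.mem_image] at hw
    obtain ⟨σ₀, -, rfl⟩ := hw
    have hsub : ∀ a b : V → Fin k → ZMod p, Φ (a - b) = Φ a - Φ b := by
      intro a b
      funext x
      simp only [hΦ, Pi.sub_apply]
      rw [← Finset.sum_sub_distrib]
      exact Finset.sum_congr rfl fun i _ => by ring
    have hne : Nonempty V := hconn.nonempty
    set v₀ : V := Classical.arbitrary V with hv₀
    have e1 : {σ : V → Fin k → ZMod p // Φ σ = Φ σ₀} ≃ {τ : V → Fin k → ZMod p // Φ τ = 0} :=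
      { toFun := fun x => ⟨x.1 - σ₀, by rw [hsub, x.2, sub_self]⟩
        invFun := fun x => ⟨x.1 + σ₀, by
          have h3 := hsub (x.1 + σ₀) σ₀
          rw [add_sub_cancel_right, x.2, eq_comm, sub_eq_zero] at h3
          exact h3⟩
        left_inv := fun x => Subtype.ext (by simp)
        right_inv := fun x => Subtype.ext (by simp) }
    have e2 : {τ : V → Fin k → ZMod p // Φ τ = 0} ≃ (Fin k → ZMod p) :=
      { toFun := fun x => x.1 v₀
        invFun := fun d => ⟨fun _ => d, by funext x; rw [hΦ]; simp⟩
        left_inv := fun x => Subtype.ext (funext fun v => hker x.1 x.2 v₀ v)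
        right_inv := fun d => rfl }
    calc (Finset.univ.filter fun σ : V → Fin k → ZMod p => Φ σ = Φ σ₀).card
        = Fintype.card {σ : V → Fin k → ZMod p // Φ σ = Φ σ₀} := (Fintype.card_subtype _).symm
      _ = Fintype.card (Fin k → ZMod p) := Fintype.card_congr (e1.trans e2)
      _ = q := by simp [ZMod.card, hq]
  -- Step D: image toFinset
  have himg : {g : (Fin k → ZMod p) × ↥G.edgeSet → ZMod p | ∃ σ, Φ σ = g}.toFinset
      = Finset.univ.image Φ := by
    ext g; simp [Set.mem_toFinset, eq_comm]
  -- Step E: LHS reindex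
  have eqv : Fin q ≃ (Fin k → ZMod p) := by
    apply Fintype.equivOfCardEq
    simp [ZMod.card, hq]
  have hLHS : ∑ σ : V → Fin q,
        (1 + gam) ^ Nat.card {e : ↥G.edgeSet // (Sym2.map σ (e : Sym2 V)).IsDiag}
      = ∑ σ : V → Fin k → ZMod p, (1 + gam) ^ mono σ := by
    refine Fintype.sum_equiv (Equiv.piCongrRight fun _ : V => eqv) _ _ fun σ => ?_
    congr 1
    rw [Nat.card_eq_fintype_card]
    refine Fintype.card_congr (Equiv.subtypeEquivRight fun e => ?_)
    rw [← horient e, Sym2.map_pair_eq, Sym2.mk_isDiag_iff]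
    simp [Equiv.piCongrRight]
  -- real exponent facts
  have hgam1 : 1 + gam = ((lam ^ c : ℝ))⁻¹ := by
    rw [hgam]
    have he : (-((q : ℝ) * ((p : ℝ) - 1)) / (p : ℝ)) = -(c : ℝ) := by
      rw [div_eq_iff hpR]; rw [← hcR]; ring
    rw [he, Real.rpow_neg hlam0.le, Real.rpow_natCast]
    ring
  have hexp2 : lam ^ (-((1 - 1 / (p : ℝ)) * (q : ℝ) * ((Nat.card ↥G.edgeSet : ℕ) : ℝ)))
      = ((lam ^ (c * m) : ℝ))⁻¹ := by
    have he : (1 - 1 / (p : ℝ)) * (q : ℝ) * ((Nat.card ↥G.edgeSet : ℕ) : ℝ)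
        = ((c * m : ℕ) : ℝ) := by
      rw [hmcard]
      push_cast
      rw [show (1 - 1 / (p : ℝ)) * (q : ℝ) = (q : ℝ) * ((p : ℝ) - 1) / p by
        field_simp]
      rw [← hcR]
      field_simp
    rw [he, ← Real.rpow_natCast lam (c * m), ← Real.rpow_neg hlam0.le]
  -- assemble
  rw [hLHS, himg, hexp2]
  have hsum : ∑ σ : V → Fin k → ZMod p,
      lam ^ Nat.card {x : (Fin k → ZMod p) × ↥G.edgeSet // Φ σ x ≠ 0}
      = (q : ℝ) * ∑ w ∈ Finset.univ.image Φ,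
          lam ^ Nat.card {x : (Fin k → ZMod p) × ↥G.edgeSet // w x ≠ 0} := by
    rw [Finset.sum_comp
      (fun w : (Fin k → ZMod p) × ↥G.edgeSet → ZMod p =>
        lam ^ Nat.card {x : (Fin k → ZMod p) × ↥G.edgeSet // w x ≠ 0}) Φ]
    rw [Finset.mul_sum]
    refine Finset.sum_congr rfl fun w hw => ?_
    rw [hfiber w hw, nsmul_eq_mul]
  rw [mul_comm (q:ℝ) ((lam ^ (c * m))⁻¹), mul_assoc, ← hsum]
  rw [Finset.mul_sum]
  refine Finset.sum_congr rfl fun σ _ => ?_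
  rw [hweight σ, hgam1]
  have hle : c * mono σ ≤ c * m := Nat.mul_le_mul_left c (hmono_le σ)
  have key : lam ^ (c * m) = lam ^ (c * (m - mono σ)) * lam ^ (c * mono σ) := by
    rw [← pow_add, ← Nat.mul_add, Nat.sub_add_cancel (hmono_le σ)]
  rw [inv_pow, ← pow_mul, key, mul_inv,
    mul_comm ((lam ^ (c * (m - mono σ)))⁻¹) ((lam ^ (c * mono σ))⁻¹), mul_assoc,
    inv_mul_cancel₀ (pow_ne_zero _ hlamne), mul_one]
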